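/- For every integer d2 ≥ 5, writing A = A(1,d2) and B = B(1,d2), one has (3(d2+2)A − 2 − d2·B)·(1 − B)^{d2/2} < 2·((d2+2)A − 1)·(1 − A)^{(d2+2)/2}. -/

import Mathlib

lemma log_pade_lower {y : ℝ} (hy : 0 ≤ y) : 2*y/(2+y) ≤ Real.log (1+y) := by
  have key : ∀ x : ℝ, 1 ≤ x → 2*(x-1)/(x+1) ≤ Real.log x := by
    intro x hx
    set f : ℝ → ℝ := fun z => Real.log z - 2*(z-1)/(z+1) with hf
    have hder : ∀ z : ℝ, 0 < z → HasDerivAt f ((z-1)^2/(z*(z+1)^2)) z := by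
      intro z hz
      have hne : z + 1 ≠ 0 := by linarith
      have h1 : HasDerivAt Real.log z⁻¹ z := Real.hasDerivAt_log hz.ne'
      have h2 : HasDerivAt (fun w : ℝ => 2*(w-1)/(w+1))
          ((2*1*(z+1) - 2*(z-1)*1)/(z+1)^2) z :=
        (((hasDerivAt_id z).sub_const 1).const_mul 2).div ((hasDerivAt_id z).add_const 1) hne
      have h3 := h1.sub h2
      refine h3.congr_deriv ?_
      field_simp
      ring
    have hmono : MonotoneOn f (Set.Ici (1:ℝ)) := by
      apply monotoneOn_of_deriv_nonneg (convex_Ici 1)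
      · intro z hz
        exact ((hder z (lt_of_lt_of_le one_pos hz)).continuousAt).continuousWithinAt
      · intro z hz
        rw [interior_Ici] at hz
        exact ((hder z (by linarith [Set.mem_Ioi.mp hz])).differentiableAt).differentiableWithinAt
      · intro z hz
        rw [interior_Ici] at hz
        have hz1 : (1:ℝ) < z := hz
        rw [(hder z (by linarith)).deriv]
        positivity
    have h1m : f 1 ≤ f x := hmono (Set.mem_Ici.mpr le_rfl) (Set.mem_Ici.mpr hx) hx
    have hf1 : f 1 = 0 := by simp [hf]
    have hfx : f x = Real.log x - 2*(x-1)/(x+1) := rfl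
    rw [hf1, hfx] at h1m
    linarith
  have h := key (1+y) (by linarith)
  have e : 2*((1+y)-1)/((1+y)+1) = 2*y/(2+y) := by ring_nf
  linarith [e ▸ h]

lemma log_pade_upper {y : ℝ} (hy : 0 ≤ y) : Real.log (1+y) ≤ y*(2+y)/(2*(1+y)) := by
  have key : ∀ x : ℝ, 1 ≤ x → Real.log x ≤ (x^2-1)/(2*x) := by
    intro x hx
    set g : ℝ → ℝ := fun z => (z^2-1)/(2*z) - Real.log z with hg
    have hder : ∀ z : ℝ, 0 < z → HasDerivAt g ((z-1)^2/(2*z^2)) z := by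
      intro z hz
      have hne : 2*z ≠ 0 := by positivity
      have h1 : HasDerivAt Real.log z⁻¹ z := Real.hasDerivAt_log hz.ne'
      have h2 : HasDerivAt (fun w : ℝ => (w^2-1)/(2*w))
          (((2*z^1)*(2*z) - (z^2-1)*(2*1))/(2*z)^2) z := by
        have hu : HasDerivAt (fun w : ℝ => w^2 - 1) (2*z^1) z := (hasDerivAt_pow 2 z).sub_const 1
        have hv : HasDerivAt (fun w : ℝ => 2*w) (2*1) z := (hasDerivAt_id z).const_mul 2
        exact hu.div hv hne
      have h3 := h2.sub h1
      refine h3.congr_deriv ?_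
      field_simp
      ring
    have hmono : MonotoneOn g (Set.Ici (1:ℝ)) := by
      apply monotoneOn_of_deriv_nonneg (convex_Ici 1)
      · intro z hz
        exact ((hder z (lt_of_lt_of_le one_pos hz)).continuousAt).continuousWithinAt
      · intro z hz
        rw [interior_Ici] at hz
        exact ((hder z (by linarith [Set.mem_Ioi.mp hz])).differentiableAt).differentiableWithinAt
      · intro z hz
        rw [interior_Ici] at hz
        have hz1 : (1:ℝ) < z := hz
        rw [(hder z (by linarith)).deriv]
        positivity
    have h1m : g 1 ≤ g x := hmono (Set.mem_Ici.mpr le_rfl) (Set.mem_Ici.mpr hx) hx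
    have hg1 : g 1 = 0 := by simp [hg]
    have hgx : g x = (x^2-1)/(2*x) - Real.log x := rfl
    rw [hg1, hgx] at h1m
    linarith
  have h := key (1+y) (by linarith)
  have e : ((1+y)^2-1)/(2*(1+y)) = y*(2+y)/(2*(1+y)) := by ring_nf
  linarith [e ▸ h]


set_option maxHeartbeats 1000000 in
lemma piece2 {n s t : ℝ} (hn : 5 ≤ n) (hs0 : 0 < s) (ht0 : 0 < t)
    (hs : s^2*(n-2) = 2*(n+1)) (ht : t^2*(n-4) = 2*(n-1)) :
    (n+2)*(1+s)*(n-1+t) ≤ n*(1+t)*(n+1+s) := by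
  have hn2 : (0:ℝ) < n - 2 := by linarith
  have hn4 : (0:ℝ) < n - 4 := by linarith
  have hd12 : (t^2 - s^2)*((n-2)*(n-4)) = 12 := by linear_combination (n-2)*ht - (n-4)*hs
  have hd0 : 0 < t^2 - s^2 := by nlinarith [hd12, mul_pos hn2 hn4]
  have hts : s ≤ t := by nlinarith [hd0, hs0, ht0]
  have hs2 : 2 ≤ s^2 := by nlinarith
  have ht9 : t^2 ≤ 9 := by nlinarith
  have ht3 : t ≤ 3 := by nlinarith
  have hst2 : 2 ≤ s*t := by nlinarith
  have i1 : s*t ≤ t*t := mul_le_mul_of_nonneg_right hts ht0.le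
  have i2 : t+s ≤ 2*t := by linarith
  have e1 : (2*s*t-2)*(t+s) ≤ (2*t^2-2)*(2*t) := by nlinarith
  have e2 : (2*t^2-2)*(2*t)*((n-2)*(n-4)) = 4*t*(n-2)*(n+2) := by
    linear_combination 4*t*(n-2)*ht
  have e3 : 4*t*(n-2)*(n+2) ≤ 12*(n-2)*(n+2) := by nlinarith
  have e0 : (n*(1+t)*(n+1+s) - (n+2)*(1+s)*(n-1+t))*((t+s)*((n-2)*(n-4)))
      = 12*(n^2-2) - (2*s*t-2)*(t+s)*((n-2)*(n-4)) := by
    linear_combination (n^2-2)*hd12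
  have e15 : (2*s*t-2)*(t+s)*((n-2)*(n-4)) ≤ (2*t^2-2)*(2*t)*((n-2)*(n-4)) :=
    mul_le_mul_of_nonneg_right e1 (mul_pos hn2 hn4).le
  have hpos : 0 < (t+s)*((n-2)*(n-4)) := by positivity
  have h24 : 0 < (n*(1+t)*(n+1+s) - (n+2)*(1+s)*(n-1+t))*((t+s)*((n-2)*(n-4))) := by
    rw [e0]; nlinarith [e15, e2, e3]
  have hW : 0 < n*(1+t)*(n+1+s) - (n+2)*(1+s)*(n-1+t) :=
    (mul_pos_iff_of_pos_right hpos).mp h24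
  linarith


set_option maxHeartbeats 2000000 in
lemma core {n s t : ℝ} (hn : 5 ≤ n) (hs0 : 0 < s) (ht0 : 0 < t)
    (hs : s^2*(n-2) = 2*(n+1)) (ht : t^2*(n-4) = 2*(n-1)) :
    (n+2)*(1+s)*(2*n+1+s)*(2*n-3+t) < 4*n^2*(1+t)*(n+1+s) := by
  have hn2 : (0:ℝ) < n - 2 := by linarith
  have hn4 : (0:ℝ) < n - 4 := by linarith
  have hm : (0:ℝ) ≤ n - 5 := by linarith
  have hd12 : (t^2 - s^2)*((n-2)*(n-4)) = 12 := by linear_combination (n-2)*ht - (n-4)*hs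
  have hd0 : 0 < t^2 - s^2 := by nlinarith [hd12, mul_pos hn2 hn4]
  have hts : s ≤ t := by nlinarith [hd0, hs0, ht0]
  -- G identity
  have hG : (4*n^2*(1+t)*(n+1+s) - (n+2)*(1+s)*(2*n+1+s)*(2*n-3+t)) * (n-2)
      = ((-6)*n + 5*n^2 - 4*n^3) + ((-24) - 8*n + 14*n^2 + 6*n^3 - 4*n^4)*s
        + (2*n - 11*n^2 - 6*n^3 + 4*n^4)*t + (8 + 8*n - 10*n^2 + 2*n^3)*(s*t) := by
    linear_combination (-(n+2)*(2*n-3+t)) * hs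
  -- t lower bound: (t-s)*(4s²+d) ≥ 2s·d  (difference is (t-s)³)
  have htlb : 2*s*(t^2-s^2) ≤ (t-s)*(4*s^2+(t^2-s^2)) := by
    linarith [pow_nonneg (sub_nonneg.mpr hts) 3]
  -- positivity of c01 + c11·s
  have hc : 0 < (2*n - 11*n^2 - 6*n^3 + 4*n^4) + (8 + 8*n - 10*n^2 + 2*n^3)*s := by
    have h1 : (0:ℝ) < 2*n - 11*n^2 - 6*n^3 + 4*n^4 := by linarith [pow_nonneg hm 2, pow_nonneg hm 3, pow_nonneg hm 4]
    have h2 : (0:ℝ) < 8 + 8*n - 10*n^2 + 2*n^3 := by linarith [pow_nonneg hm 2, pow_nonneg hm 3]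
    linarith [mul_pos h2 hs0]
  -- G·(4s²+d) ≥ H
  have hGH : (((-6)*n + 5*n^2 - 4*n^3) + ((-24) - 8*n + 14*n^2 + 6*n^3 - 4*n^4)*s)*(4*s^2+(t^2-s^2))
        + ((2*n - 11*n^2 - 6*n^3 + 4*n^4) + (8 + 8*n - 10*n^2 + 2*n^3)*s)
            *(s*(4*s^2+(t^2-s^2)) + 2*s*(t^2-s^2))
      ≤ (((-6)*n + 5*n^2 - 4*n^3) + ((-24) - 8*n + 14*n^2 + 6*n^3 - 4*n^4)*s
        + (2*n - 11*n^2 - 6*n^3 + 4*n^4)*t + (8 + 8*n - 10*n^2 + 2*n^3)*(s*t))*(4*s^2+(t^2-s^2)) := by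
    linarith [mul_nonneg hc.le (sub_nonneg.mpr htlb)]
  -- H·(n-2)²(n-4) = α + β s
  have hH : ((((-6)*n + 5*n^2 - 4*n^3) + ((-24) - 8*n + 14*n^2 + 6*n^3 - 4*n^4)*s)*(4*s^2+(t^2-s^2))
        + ((2*n - 11*n^2 - 6*n^3 + 4*n^4) + (8 + 8*n - 10*n^2 + 2*n^3)*s)
            *(s*(4*s^2+(t^2-s^2)) + 2*s*(t^2-s^2))) * ((n-2)^2*(n-4))
      = (64 - 496*n - 624*n^2 + 508*n^3 + 8*n^4 - 24*n^5)
        + ((-960) - 1008*n + 1488*n^2 + 156*n^3 - 504*n^4 + 120*n^5)*s := by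
    linear_combination
      ((2*n^5 - 22*n^4 + 84*n^3 - 120*n^2 + 16*n + 64)*s^2
        + ((-8)*n^6 + 60*n^5 - 105*n^4 - 112*n^3 + 308*n^2 + 256*n - 576)*s
        + (4*n^5 - 41*n^4 + 108*n^3 + 60*n^2 - 304*n + 32)) * hs
      + ((6*n^5 - 54*n^4 + 168*n^3 - 192*n^2 + 96)*s^2
        + (8*n^6 - 44*n^5 + 61*n^4 + 26*n^3 - 92*n^2 + 88*n - 96)*s
        + ((-4)*n^5 + 21*n^4 - 42*n^3 + 44*n^2 - 24*n)) * ht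
  -- β > 0
  have hb : (0:ℝ) < (-960) - 1008*n + 1488*n^2 + 156*n^3 - 504*n^4 + 120*n^5 := by
    linarith [pow_nonneg hm 2, pow_nonneg hm 3, pow_nonneg hm 4, pow_nonneg hm 5]
  -- Q > 0
  have hQ : (n-2)*((64 - 496*n - 624*n^2 + 508*n^3 + 8*n^4 - 24*n^5))^2
      < 2*(n+1)*(((-960) - 1008*n + 1488*n^2 + 156*n^3 - 504*n^4 + 120*n^5))^2 := by
    linarith [pow_nonneg hm 2, pow_nonneg hm 3, pow_nonneg hm 4, pow_nonneg hm 5,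
      pow_nonneg hm 6, pow_nonneg hm 7, pow_nonneg hm 8, pow_nonneg hm 9,
      pow_nonneg hm 10, pow_nonneg hm 11, hm]
  -- α + β s > 0
  have hab : 0 < (64 - 496*n - 624*n^2 + 508*n^3 + 8*n^4 - 24*n^5)
      + ((-960) - 1008*n + 1488*n^2 + 156*n^3 - 504*n^4 + 120*n^5)*s := by
    set α := 64 - 496*n - 624*n^2 + 508*n^3 + 8*n^4 - 24*n^5 with hαdef
    set β := (-960) - 1008*n + 1488*n^2 + 156*n^3 - 504*n^4 + 120*n^5 with hβdef
    have hsq : (β*s)^2*(n-2) = 2*(n+1)*β^2 := by linear_combination β^2*hs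
    by_contra hcon
    push_neg at hcon
    have h1 : β*s ≤ -α := by linarith
    have h2 : 0 < β*s := mul_pos hb hs0
    have h3 : (β*s)^2 ≤ α^2 := by nlinarith [mul_le_mul h1 h1 h2.le (le_trans h2.le h1)]
    have h4 : (β*s)^2*(n-2) ≤ α^2*(n-2) := mul_le_mul_of_nonneg_right h3 hn2.le
    rw [hsq] at h4
    linarith [hQ, h4]
  -- conclude
  have h4sd : 0 < 4*s^2+(t^2-s^2) := by linarith [pow_pos hs0 2, sq_nonneg t]
  have hK : 0 < (n-2)^2*(n-4) := by positivity
  -- G·(4s²+d)·K ≥ H·K = α+βs > 0 ⇒ G > 0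
  have hHpos : 0 < (((-6)*n + 5*n^2 - 4*n^3) + ((-24) - 8*n + 14*n^2 + 6*n^3 - 4*n^4)*s)*(4*s^2+(t^2-s^2))
        + ((2*n - 11*n^2 - 6*n^3 + 4*n^4) + (8 + 8*n - 10*n^2 + 2*n^3)*s)
            *(s*(4*s^2+(t^2-s^2)) + 2*s*(t^2-s^2)) :=
    (mul_pos_iff_of_pos_right hK).mp (by rw [hH]; exact hab)
  have hGE := lt_of_lt_of_le hHpos hGH
  have hGpos : 0 < ((-6)*n + 5*n^2 - 4*n^3) + ((-24) - 8*n + 14*n^2 + 6*n^3 - 4*n^4)*s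
        + (2*n - 11*n^2 - 6*n^3 + 4*n^4)*t + (8 + 8*n - 10*n^2 + 2*n^3)*(s*t) :=
    (mul_pos_iff_of_pos_right h4sd).mp hGE
  have hfin : 0 < (4*n^2*(1+t)*(n+1+s) - (n+2)*(1+s)*(2*n+1+s)*(2*n-3+t)) :=
    (mul_pos_iff_of_pos_right hn2).mp (by rw [hG]; exact hGpos)
  linarith


/-- Upper endpoint `A(d1,d2)`. -/
noncomputable def Aval (d1 d2 : ℕ) : ℝ :=
  (d1 : ℝ) / (d1 + d2 * (1 + Real.sqrt (2 * ((d1 : ℝ) + d2) / (d1 * ((d2 : ℝ) - 2))))⁻¹)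

/-- Upper endpoint `B(d1,d2)`. -/
noncomputable def Bval (d1 d2 : ℕ) : ℝ :=
  (d1 : ℝ) / (d1 + ((d2 : ℝ) - 2) *
    (1 + Real.sqrt (2 * ((d1 : ℝ) + d2 - 2) / (d1 * ((d2 : ℝ) - 4))))⁻¹)

set_option maxHeartbeats 1000000 in
theorem key_inequality_d1_eq_one (d2 : ℕ) (hd2 : 5 ≤ d2) :
    (3 * ((d2 : ℝ) + 2) * Aval 1 d2 - 2 - (d2 : ℝ) * Bval 1 d2) *
        (1 - Bval 1 d2) ^ ((d2 : ℝ) / 2) <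
      2 * (((d2 : ℝ) + 2) * Aval 1 d2 - 1) * (1 - Aval 1 d2) ^ (((d2 : ℝ) + 2) / 2) := by
  set n : ℝ := (d2 : ℝ) with hndef
  have hn : (5:ℝ) ≤ n := by rw [hndef]; exact_mod_cast hd2
  have hn2 : (0:ℝ) < n - 2 := by linarith
  have hn4 : (0:ℝ) < n - 4 := by linarith
  have hn0 : (0:ℝ) < n := by linarith
  set s : ℝ := Real.sqrt (2*(n+1)/(n-2)) with hsdef
  set t : ℝ := Real.sqrt (2*(n-1)/(n-4)) with htdef
  have hargA : (0:ℝ) < 2*(n+1)/(n-2) := div_pos (by linarith) hn2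
  have hargB : (0:ℝ) < 2*(n-1)/(n-4) := div_pos (by linarith) hn4
  have hs0 : 0 < s := Real.sqrt_pos.mpr hargA
  have ht0 : 0 < t := Real.sqrt_pos.mpr hargB
  have hs : s^2*(n-2) = 2*(n+1) := by
    rw [hsdef, Real.sq_sqrt hargA.le]
    field_simp
  have ht : t^2*(n-4) = 2*(n-1) := by
    rw [htdef, Real.sq_sqrt hargB.le]
    field_simp
  have hdA : (0:ℝ) < n + 1 + s := by linarith
  have hdB : (0:ℝ) < n - 1 + t := by linarith
  have h1s : (0:ℝ) < 1 + s := by linarith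
  have h1t : (0:ℝ) < 1 + t := by linarith
  have hA : Aval 1 d2 = (1+s)/(n+1+s) := by
    unfold Aval
    simp only [Nat.cast_one, ← hndef]
    rw [show 2*((1:ℝ)+n)/(1*(n-2)) = 2*(n+1)/(n-2) by ring, ← hsdef]
    have hden : 1 + n*(1+s)⁻¹ = (n+1+s)/(1+s) := by
      field_simp
      ring
    rw [hden, one_div, inv_div]
  have hB : Bval 1 d2 = (1+t)/(n-1+t) := by
    unfold Bval
    simp only [Nat.cast_one, ← hndef]
    rw [show 2*((1:ℝ)+n-2)/(1*(n-4)) = 2*(n-1)/(n-4) by ring, ← htdef]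
    have hden : 1 + (n-2)*(1+t)⁻¹ = (n-1+t)/(1+t) := by
      field_simp
      ring
    rw [hden, one_div, inv_div]
  -- basic facts
  have h2 : 1 < (n+2) * Aval 1 d2 := by
    rw [hA, mul_div_assoc', lt_div_iff₀ hdA]
    nlinarith [hs0, hn]
  have h3 : (n+2) * Aval 1 d2 ≤ n * Bval 1 d2 := by
    rw [hA, hB, mul_div_assoc', mul_div_assoc', div_le_div_iff₀ hdA hdB]
    exact piece2 hn hs0 ht0 hs ht
  have h1A : 1 - Aval 1 d2 = n/(n+1+s) := by
    rw [hA, eq_div_iff hdA.ne', sub_mul, div_mul_cancel₀ _ hdA.ne']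
    ring
  have h1B : 1 - Bval 1 d2 = (n-2)/(n-1+t) := by
    rw [hB, eq_div_iff hdB.ne', sub_mul, div_mul_cancel₀ _ hdB.ne']
    ring
  have h1A0 : 0 < 1 - Aval 1 d2 := by rw [h1A]; positivity
  have h1B0 : 0 < 1 - Bval 1 d2 := by rw [h1B]; positivity
  -- log machinery
  set a : ℝ := (1+s)/n with hadef
  set b : ℝ := (1+t)/(n-2) with hbdef
  have ha0 : 0 ≤ a := by positivity
  have hb0 : 0 ≤ b := by positivity
  have hmid : (n+2)*(a*(2+a)/(2*(1+a))) < n*(2*b/(2+b)) := by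
    have hX : a*(2+a)/(2*(1+a)) = ((1+s)*(2*n+1+s))/(2*n*(n+1+s)) := by
      have hap : (0:ℝ) < 2*(1+(1+s)/n) := by
        have := div_pos h1s hn0; linarith
      rw [hadef, div_eq_div_iff hap.ne' (by nlinarith [hn0, hdA] : (0:ℝ) < 2*n*(n+1+s)).ne']
      field_simp
      ring
    have hY : 2*b/(2+b) = (2*(1+t))/(2*n-3+t) := by
      have hbp : (0:ℝ) < 2 + (1+t)/(n-2) := by
        have := div_pos h1t hn2; linarith
      rw [hbdef, div_eq_div_iff hbp.ne' (by linarith : (0:ℝ) < 2*n-3+t).ne']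
      field_simp
      ring
    rw [hX, hY, mul_div_assoc', mul_div_assoc',
      div_lt_div_iff₀ (by nlinarith [hn0, hdA] : (0:ℝ) < 2*n*(n+1+s)) (by linarith : (0:ℝ) < 2*n-3+t)]
    linarith [core hn hs0 ht0 hs ht]
  have hlog : (n+2)*Real.log (1+a) < n*Real.log (1+b) := by
    calc (n+2)*Real.log (1+a) ≤ (n+2)*(a*(2+a)/(2*(1+a))) :=
          mul_le_mul_of_nonneg_left (log_pade_upper ha0) (by linarith)
      _ < n*(2*b/(2+b)) := hmid
      _ ≤ n*Real.log (1+b) := mul_le_mul_of_nonneg_left (log_pade_lower hb0) (by linarith)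
  have hlogA : Real.log (1 - Aval 1 d2) = -Real.log (1+a) := by
    have e : (1+a)⁻¹ = n/(n+1+s) := by
      rw [hadef, show (1:ℝ) + (1+s)/n = (n+1+s)/n by field_simp; ring, inv_div]
    rw [h1A, ← e, Real.log_inv]
  have hlogB : Real.log (1 - Bval 1 d2) = -Real.log (1+b) := by
    have e : (1+b)⁻¹ = (n-2)/(n-1+t) := by
      rw [hbdef, show (1:ℝ) + (1+t)/(n-2) = (n-1+t)/(n-2) by field_simp; ring, inv_div]
    rw [h1B, ← e, Real.log_inv]
  have hBlt : (1 - Bval 1 d2) ^ (n/2) < (1 - Aval 1 d2) ^ ((n+2)/2) := by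
    rw [Real.rpow_def_of_pos h1B0, Real.rpow_def_of_pos h1A0]
    apply Real.exp_lt_exp.mpr
    rw [hlogA, hlogB]
    linarith [hlog]
  have hP : 0 < (1 - Bval 1 d2) ^ (n/2) := Real.rpow_pos_of_pos h1B0 _
  have e3 := mul_le_mul_of_nonneg_right (sub_nonpos.mpr h3) hP.le
  have e4 : 2*((n+2)*Aval 1 d2 - 1) * ((1 - Bval 1 d2)^(n/2))
      < 2*((n+2)*Aval 1 d2 - 1) * ((1 - Aval 1 d2)^((n+2)/2)) :=
    mul_lt_mul_of_pos_left hBlt (by linarith)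
  nlinarith [e3, e4, hP]
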